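/- Let w be a word of length n ≥ 1 over an alphabet Σ. The shortest prefix y of w such that w = y^ℓ for some ℓ ≥ 1 has length equal to p, where p is the least positive integer such that w occurs as a factor of w·w starting at position p. -/

import Mathlib

/-- The `ℓ`-fold concatenation `y^ℓ` of a word `y`. -/
def repw {α : Type*} (w : List α) : ℕ → List α
  | 0 => []
  | n + 1 => w ++ repw w n

/-- `w` occurs as a factor of `z` starting at position `p`. -/
def OccursAt {α : Type*} (w z : List α) (p : ℕ) : Prop :=
  ∃ x y : List α, z = x ++ w ++ y ∧ x.length = p

lemma repw_add {α : Type*} (t : List α) (a b : ℕ) :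
    repw t (a + b) = repw t a ++ repw t b := by
  induction a with
  | zero => simp [repw]
  | succ n ih =>
    have : n + 1 + b = (n + b) + 1 := by omega
    rw [this]
    simp [repw, ih]

lemma repw_length {α : Type*} (t : List α) (a : ℕ) :
    (repw t a).length = a * t.length := by
  induction a with
  | zero => simp [repw]
  | succ n ih => simp [repw, ih]; ring

/-- key step: if `y ++ z = z ++ y` and `|y| ≤ |z|`, then `y` is a prefix of `z`
and the tail still commutes with `y`. -/
lemma comm_step {α : Type*} (y z : List α) (hle : y.length ≤ z.length)
    (h : y ++ z = z ++ y) : ∃ z', z = y ++ z' ∧ y ++ z' = z' ++ y := by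
  have hy : y = z.take y.length := by
    have h1 : (y ++ z).take y.length = y := by simp
    have h2 : (z ++ y).take y.length = z.take y.length := by
      rw [List.take_append]
      have : y.length - z.length = 0 := by omega
      simp [this]
    rw [h] at h1
    rw [h2] at h1
    exact h1.symm
  refine ⟨z.drop y.length, ?_, ?_⟩
  · conv_lhs => rw [← List.take_append_drop y.length z, ← hy]
  · have hz : z = y ++ z.drop y.length := by
      conv_lhs => rw [← List.take_append_drop y.length z, ← hy]
    rw [hz] at h
    have h' : y ++ (y ++ z.drop y.length) = y ++ (z.drop y.length ++ y) := by
      simpa [List.append_assoc] using h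
    exact List.append_cancel_left h'

lemma comm_repw {α : Type*} : ∀ (n : ℕ) (y z : List α), y.length + z.length ≤ n →
    y ++ z = z ++ y → ∃ t a b, y = repw t a ∧ z = repw t b := by
  intro n
  induction n with
  | zero =>
    intro y z hn _
    have hy : y = [] := by
      have := List.length_eq_zero_iff.mp (by omega : y.length = 0); exact this
    have hz : z = [] := by
      have := List.length_eq_zero_iff.mp (by omega : z.length = 0); exact this
    exact ⟨[], 0, 0, by simp [hy, repw], by simp [hz, repw]⟩
  | succ n ih =>
    intro y z hn h
    rcases eq_or_ne y [] with rfl | hy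
    · exact ⟨z, 0, 1, rfl, by simp [repw]⟩
    rcases eq_or_ne z [] with rfl | hz
    · exact ⟨y, 1, 0, by simp [repw], rfl⟩
    have hy1 : 1 ≤ y.length := List.length_pos_iff.mpr hy
    have hz1 : 1 ≤ z.length := List.length_pos_iff.mpr hz
    by_cases hle : y.length ≤ z.length
    · obtain ⟨z', rfl, hcomm⟩ := comm_step y z hle h
      obtain ⟨t, a, b, hyt, hzt⟩ := ih y z' (by
        have := @List.length_append _ y z'; omega) hcomm
      exact ⟨t, a, a + b, hyt, by rw [repw_add, ← hyt, ← hzt]⟩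
    · obtain ⟨y', rfl, hcomm⟩ := comm_step z y (by omega) h.symm
      obtain ⟨t, a, b, hzt, hyt⟩ := ih z y' (by
        have := @List.length_append _ z y'; omega) hcomm
      exact ⟨t, a + b, a, by rw [repw_add, ← hyt, ← hzt], hzt⟩

/-- For a nonempty word `w`, the shortest prefix `y` of `w` with `w = y^ℓ` for some
`ℓ ≥ 1` has length `p`, where `p` is the least positive position at which `w`
occurs as a factor of `w·w`. -/
theorem shortest_root_eq_least_period {α : Type*} (w : List α) (hw : 1 ≤ w.length)
    (p : ℕ) (hp : 0 < p) (hocc : OccursAt w (w ++ w) p)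
    (hleast : ∀ q : ℕ, 0 < q → OccursAt w (w ++ w) q → p ≤ q) :
    (∃ ℓ : ℕ, 1 ≤ ℓ ∧ w = repw (w.take p) ℓ) ∧
      ∀ q : ℕ, (∃ ℓ : ℕ, 1 ≤ ℓ ∧ w = repw (w.take q) ℓ) → p ≤ q := by
  set n := w.length with hn
  -- general occurrence lemma: if w = repw u ℓ with ℓ ≥ 1 and u ≠ [], then
  -- w occurs in w ++ w at position u.length
  have occ_of_rep : ∀ (u : List α) (ℓ : ℕ), 1 ≤ ℓ → w = repw u ℓ →
      OccursAt w (w ++ w) u.length := by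
    intro u ℓ hℓ hwu
    refine ⟨u, repw u (ℓ - 1), ?_, rfl⟩
    have h2 : ℓ + ℓ = 1 + (ℓ + (ℓ - 1)) := by omega
    rw [hwu, ← repw_add, h2, repw_add, repw_add]
    simp [repw]
  constructor
  · -- existence part
    obtain ⟨x, s, hxs, hxlen⟩ := hocc
    have hlen := congrArg List.length hxs
    simp at hlen
    have hpn : p ≤ n := by omega
    have hx : x = w.take p := by
      have h1 : (w ++ w).take p = w.take p := by
        rw [List.take_append]
        have : p - n = 0 := by omega
        simp [this, ← hn]
      have h2 : (x ++ w ++ s).take p = x := by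
        rw [List.append_assoc, List.take_append]
        have : p - x.length = 0 := by omega
        simp [this, hxlen]
      rw [hxs, h2] at h1
      exact h1
    subst hx
    -- derive drop p ++ w = w ++ s
    have hd : w.drop p ++ w = w ++ s := by
      have : w.take p ++ (w.drop p ++ w) = w.take p ++ (w ++ s) := by
        calc w.take p ++ (w.drop p ++ w) = (w.take p ++ w.drop p) ++ w := by
              rw [List.append_assoc]
          _ = w ++ w := by rw [List.take_append_drop]
          _ = w.take p ++ (w ++ s) := by rw [hxs, List.append_assoc]
      exact List.append_cancel_left this
    -- derive drop p ++ take p = w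
    have hrot : w.drop p ++ w.take p = w := by
      have h1 : (w.drop p ++ w).take n = w.drop p ++ w.take p := by
        rw [List.take_append]
        have hdl : (w.drop p).length = n - p := by simp [← hn]
        have : n - (w.drop p).length = p := by omega
        rw [this]
        congr 1
        rw [List.take_of_length_le (by omega)]
      have h2 : (w ++ s).take n = w := by
        rw [List.take_append]
        have : n - w.length = 0 := by omega
        simp [this, ← hn]
      rw [hd, h2] at h1
      exact h1.symm
    -- commutation
    have hcomm : w.take p ++ w.drop p = w.drop p ++ w.take p := by
      rw [List.take_append_drop, hrot]
    obtain ⟨t, a, b, hyt, hzt⟩ :=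
      comm_repw ((w.take p).length + (w.drop p).length) (w.take p) (w.drop p)
        le_rfl hcomm
    have hylen : (w.take p).length = p := by simp [← hn]; omega
    have ha : 1 ≤ a := by
      rcases Nat.eq_zero_or_pos a with rfl | h
      · exfalso
        have : (w.take p).length = 0 := by rw [hyt]; simp [repw]
        omega
      · omega
    have htlen : 0 < t.length := by
      have := congrArg List.length hyt
      rw [repw_length] at this
      by_contra h
      push_neg at h
      interval_cases ht : t.length <;> omega
    have htp : t.length ≤ p := by
      have := congrArg List.length hyt
      rw [repw_length] at this
      nlinarith
    -- w = repw t (a + b)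
    have hwt : w = repw t (a + b) := by
      rw [repw_add, ← hyt, ← hzt, List.take_append_drop]
    have hab : 1 ≤ a + b := by omega
    have hocc' := occ_of_rep t (a + b) hab hwt
    have hple := hleast t.length htlen hocc'
    have htp' : t.length = p := le_antisymm htp hple
    have ha1 : a = 1 := by
      have := congrArg List.length hyt
      rw [repw_length] at this
      nlinarith
    have hty : t = w.take p := by
      rw [hyt, ha1]
      simp [repw]
    refine ⟨a + b, hab, ?_⟩
    rw [← hty]
    exact hwt
  · -- minimality part
    rintro q ⟨ℓ, hℓ, hwq⟩
    have hlen := congrArg List.length hwq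
    rw [repw_length] at hlen
    have hul : (w.take q).length = min q n := by simp [← hn]
    have hupos : 0 < (w.take q).length := by
      by_contra h
      push_neg at h
      have h0 : (w.take q).length = 0 := by omega
      rw [h0, Nat.mul_zero] at hlen
      omega
    have hocc' := occ_of_rep (w.take q) ℓ hℓ hwq
    have hle := hleast (w.take q).length hupos hocc'
    have hq : (w.take q).length ≤ q := by rw [hul]; omega
    exact hle.trans hq
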